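/- For the Lag system R_t (which extends R_p with rules blank·t → p, blank·w → blank, t·blank → w, w·blank → w, w·p → t, p·w → blank), starting from the string (s₁,blank)...(s_{n-2},blank)(s_{n-1},t)(sₙ,blank) with n ≥ 3: after (n−1)² iterations the memory string is (s₂,blank)...(s_{n-1},w)(sₙ,p)(s₁,blank), and after n(n−1) iterations the memory string equals the initial string. -/

import Mathlib

namespace Stmt5

/-- Control symbols: blank, pulse `p`, and the stationary tokens `t`, `w`. -/
inductive Ctl | blank | p | t | w
deriving DecidableEq

/-- The rule set `R_t` on control coordinates: `R_p` extended with
`blank·t → p`, `blank·w → blank`, `t·blank → w`, `w·blank → w`,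
`w·p → t`, `p·w → blank`. -/
def rc : Ctl → Ctl → Option Ctl
  | .blank, .blank => some .blank
  | .blank, .p => some .p
  | .p, .blank => some .blank
  | .blank, .t => some .p
  | .blank, .w => some .blank
  | .t, .blank => some .w
  | .w, .blank => some .w
  | .w, .p => some .t
  | .p, .w => some .blank
  | _, _ => none

/-- One Lag iteration with context length 2. -/
def step {α : Type*} (r : Ctl → Ctl → Option Ctl) :
    List (α × Ctl) → Option (List (α × Ctl))
  | (x, a) :: (y, b) :: rest => (r a b).map fun c => (y, b) :: rest ++ [(x, c)]
  | _ => none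

/-- `k` iterations of the Lag system. -/
def iterL {α : Type*} (r : Ctl → Ctl → Option Ctl) :
    ℕ → List (α × Ctl) → Option (List (α × Ctl))
  | 0, s => some s
  | k + 1, s => (step r s).bind (iterL r k)

end Stmt5

namespace LagAux
open Stmt5
variable {α : Type*}

/-- tag a list of data symbols with blank controls -/
def bl (xs : List α) : List (α × Ctl) := xs.map (fun x => (x, Ctl.blank))

@[simp] lemma bl_nil : bl ([] : List α) = [] := rfl
@[simp] lemma bl_cons (x : α) (xs : List α) : bl (x :: xs) = (x, Ctl.blank) :: bl xs := rfl
@[simp] lemma bl_append (xs ys : List α) : bl (xs ++ ys) = bl xs ++ bl ys := List.map_append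
@[simp] lemma bl_length (xs : List α) : (bl xs).length = xs.length := List.length_map _

lemma iterL_add (r : Ctl → Ctl → Option Ctl) (a b : ℕ) (s : List (α × Ctl)) :
    iterL r (a + b) s = (iterL r a s).bind (iterL r b) := by
  induction a generalizing s with
  | zero => simp [iterL]
  | succ k ih =>
    rw [Nat.succ_add]
    show (step r s).bind (iterL r (k + b)) = ((step r s).bind (iterL r k)).bind (iterL r b)
    rw [Option.bind_assoc]
    cases step r s with
    | none => simp
    | some s' => simpa using ih s'

lemma step1 {a b c : Ctl} (h : rc a b = some c) (k : ℕ) (x y : α) (L : List (α × Ctl)) :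
    iterL rc (k + 1) ((x, a) :: (y, b) :: L) = iterL rc k ((y, b) :: (L ++ [(x, c)])) := by
  show (step rc _).bind _ = _
  simp [step, h]

/-- passing a run of blanks: each step re-emits a blank at the end -/
lemma pass (ys : List α) : ∀ (m : α × Ctl) (M : List (α × Ctl)),
    rc .blank m.2 = some .blank → ∀ k,
    iterL rc (ys.length + k) (bl ys ++ m :: M) = iterL rc k (m :: (M ++ bl ys)) := by
  induction ys with
  | nil => intro m M h k; simp
  | cons z ys ih =>
    intro m M h k
    cases ys with
    | nil =>
      obtain ⟨mx, mc⟩ := m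
      have : (([z] : List α).length + k) = k + 1 := by simp [Nat.add_comm]
      rw [this]
      rw [show bl [z] ++ (mx, mc) :: M = (z, Ctl.blank) :: (mx, mc) :: M by simp]
      rw [step1 h]
      simp
    | cons w ws =>
      have hlen : ((z :: w :: ws : List α).length + k) = ((w :: ws : List α).length + k) + 1 := by
        simp [Nat.add_right_comm]
      rw [hlen]
      rw [show bl (z :: w :: ws) ++ m :: M
            = (z, Ctl.blank) :: (w, Ctl.blank) :: (bl ws ++ m :: M) by simp]
      rw [step1 (show rc .blank .blank = some .blank from rfl)]
      rw [show (w, Ctl.blank) :: (bl ws ++ m :: M ++ [(z, Ctl.blank)])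
            = bl (w :: ws) ++ m :: (M ++ [(z, Ctl.blank)]) by simp]
      rw [ih m (M ++ [(z, Ctl.blank)]) h k]
      simp

/-- initial phase: `b^a b t b → b (shifted) p w`, in `a+2` steps -/
lemma initP (D : List α) (d t_ v : α) (k : ℕ) :
    iterL rc (D.length + 2 + k)
      (bl D ++ [(d, .blank), (t_, .t), (v, .blank)]) =
    iterL rc k ((v, .blank) :: (bl D ++ [(d, .p), (t_, .w)])) := by
  have h1 : D.length + 2 + k = D.length + (2 + k) := by omega
  rw [h1, show (bl D ++ [(d, Ctl.blank), (t_, Ctl.t), (v, Ctl.blank)] : List (α × Ctl))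
        = bl D ++ (d, Ctl.blank) :: [(t_, Ctl.t), (v, Ctl.blank)] by simp,
      pass D (d, .blank) _ rfl]
  rw [show ((d, Ctl.blank) :: ([(t_, Ctl.t), (v, Ctl.blank)] ++ bl D) : List (α × Ctl))
        = (d, Ctl.blank) :: (t_, Ctl.t) :: ((v, Ctl.blank) :: bl D) by simp]
  rw [show 2 + k = (k + 1) + 1 by omega, step1 (show rc .blank .t = some .p from rfl)]
  rw [show ((t_, Ctl.t) :: ((v, Ctl.blank) :: bl D ++ [(d, Ctl.p)]) : List (α × Ctl))
        = (t_, Ctl.t) :: (v, Ctl.blank) :: (bl D ++ [(d, Ctl.p)]) by simp]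
  rw [step1 (show rc .t .blank = some .w from rfl)]
  simp

/-- pulse absorption: `b p b^c w tail → w tail p b b^c` in `c+2` steps -/
lemma subP (ys : List α) (x u v : α) (tail : List (α × Ctl)) (k : ℕ) :
    iterL rc (ys.length + 2 + k)
      ((x, .blank) :: (u, .p) :: (bl ys ++ (v, .w) :: tail)) =
    iterL rc k ((v, .w) :: (tail ++ (x, .p) :: (u, .blank) :: bl ys)) := by
  rw [show ys.length + 2 + k = (ys.length + 1 + k) + 1 by omega,
      step1 (show rc .blank .p = some .p from rfl)]
  cases ys with
  | nil =>
    rw [show ((u, Ctl.p) :: (bl ([] : List α) ++ (v, Ctl.w) :: tail ++ [(x, Ctl.p)]) : List (α × Ctl))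
          = (u, Ctl.p) :: (v, Ctl.w) :: (tail ++ [(x, Ctl.p)]) by simp]
    rw [show ([] : List α).length + 1 + k = k + 1 by simp only [List.length_nil]; omega]
    rw [step1 (show rc .p .w = some .blank from rfl)]
    simp
  | cons z zs =>
    rw [show ((u, Ctl.p) :: (bl (z :: zs) ++ (v, Ctl.w) :: tail ++ [(x, Ctl.p)]) : List (α × Ctl))
          = (u, Ctl.p) :: (z, Ctl.blank) :: (bl zs ++ (v, Ctl.w) :: tail ++ [(x, Ctl.p)]) by simp]
    rw [show (z :: zs : List α).length + 1 + k = (zs.length + 1 + k) + 1 by simp; omega]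
    rw [step1 (show rc .p .blank = some .blank from rfl)]
    rw [show ((z, Ctl.blank) :: (bl zs ++ (v, Ctl.w) :: tail ++ [(x, Ctl.p)] ++ [(u, Ctl.blank)]) : List (α × Ctl))
          = bl (z :: zs) ++ (v, Ctl.w) :: (tail ++ [(x, Ctl.p), (u, Ctl.blank)]) by simp]
    rw [show zs.length + 1 + k = (z :: zs : List α).length + k by simp]
    rw [pass (z :: zs) (v, .w) _ rfl k]
    simp

/-- one round: pulse moves one slot left (cyclically), `a + c + 2` steps -/
lemma round (xs : List α) (hxs : xs ≠ []) (x u : α) (ys : List α) (v : α) (k : ℕ) :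
    iterL rc (xs.length + ys.length + 3 + k)
      (bl (xs ++ [x]) ++ (u, .p) :: (bl ys ++ [(v, .w)])) =
    iterL rc k (bl xs ++ (x, .p) :: (bl (u :: ys) ++ [(v, .w)])) := by
  rw [show xs.length + ys.length + 3 + k = xs.length + (ys.length + 2 + (k + 1)) by omega]
  rw [show (bl (xs ++ [x]) ++ (u, Ctl.p) :: (bl ys ++ [(v, Ctl.w)]) : List (α × Ctl))
        = bl xs ++ (x, Ctl.blank) :: ((u, Ctl.p) :: (bl ys ++ [(v, Ctl.w)])) by simp]
  rw [pass xs (x, .blank) _ rfl]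
  rw [show ((x, Ctl.blank) :: ((u, Ctl.p) :: (bl ys ++ [(v, Ctl.w)]) ++ bl xs) : List (α × Ctl))
        = (x, Ctl.blank) :: (u, Ctl.p) :: (bl ys ++ (v, Ctl.w) :: bl xs) by simp]
  rw [subP ys x u v (bl xs) (k + 1)]
  obtain ⟨z, zs, rfl⟩ : ∃ z zs, xs = z :: zs := by
    cases xs with
    | nil => exact absurd rfl hxs
    | cons z zs => exact ⟨z, zs, rfl⟩
  rw [show ((v, Ctl.w) :: (bl (z :: zs) ++ (x, Ctl.p) :: (u, Ctl.blank) :: bl ys) : List (α × Ctl))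
        = (v, Ctl.w) :: (z, Ctl.blank) :: (bl zs ++ (x, Ctl.p) :: (u, Ctl.blank) :: bl ys) by simp]
  rw [step1 (show rc .w .blank = some .w from rfl)]
  simp

/-- put a pulse on the head of a data list, blanks on the rest -/
def pk : List α → List (α × Ctl)
  | [] => []
  | z :: zs => (z, Ctl.p) :: bl zs

lemma rounds (B2 : List α) : ∀ (B1 : List α), B1 ≠ [] → ∀ (y : α) (C : List α) (v : α) (k : ℕ),
    iterL rc (B2.length * (B1.length + B2.length + C.length + 2) + k)
      (bl (B1 ++ B2) ++ (y, .p) :: (bl C ++ [(v, .w)])) =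
    iterL rc k (bl B1 ++ pk (B2 ++ y :: C) ++ [(v, .w)]) := by
  induction B2 using List.reverseRecOn with
  | nil => intro B1 _ y C v k; simp [pk]
  | append_singleton B2 b ih =>
    intro B1 hB1 y C v k
    have hlen : (B2 ++ [b]).length * (B1.length + (B2 ++ [b]).length + C.length + 2) + k
        = (B1 ++ B2).length + C.length + 3
          + (B2.length * (B1.length + B2.length + (y :: C).length + 2) + k) := by
      simp; ring
    rw [hlen]
    rw [show bl (B1 ++ (B2 ++ [b])) = bl ((B1 ++ B2) ++ [b]) by simp]
    rw [round (B1 ++ B2) (by simp [hB1]) b y C v]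
    rw [show (bl (B1 ++ B2) ++ (b, Ctl.p) :: (bl (y :: C) ++ [(v, Ctl.w)]) : List (α × Ctl))
          = bl (B1 ++ B2) ++ (b, Ctl.p) :: (bl (y :: C) ++ [(v, Ctl.w)]) from rfl]
    rw [ih B1 hB1 b (y :: C) v k]
    rw [show B2 ++ b :: y :: C = (B2 ++ [b]) ++ y :: C by simp]

/-- two steps into the final phase (the `(n-1)^2` milestone) -/
lemma fin2 (x1 e : α) (E : List α) (v : α) (k : ℕ) :
    iterL rc (2 + k)
      ((x1, .blank) :: (e, .p) :: (bl E ++ [(v, .w)])) =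
    iterL rc k (bl E ++ [(v, .w), (x1, .p), (e, .blank)]) := by
  rw [show 2 + k = (k + 1) + 1 by omega,
      step1 (show rc .blank .p = some .p from rfl)]
  cases E with
  | nil =>
    rw [show ((e, Ctl.p) :: (bl ([] : List α) ++ [(v, Ctl.w)] ++ [(x1, Ctl.p)]) : List (α × Ctl))
          = (e, Ctl.p) :: (v, Ctl.w) :: [(x1, Ctl.p)] by simp]
    rw [step1 (show rc .p .w = some .blank from rfl)]
    simp
  | cons z zs =>
    rw [show ((e, Ctl.p) :: (bl (z :: zs) ++ [(v, Ctl.w)] ++ [(x1, Ctl.p)]) : List (α × Ctl))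
          = (e, Ctl.p) :: (z, Ctl.blank) :: (bl zs ++ [(v, Ctl.w), (x1, Ctl.p)]) by simp]
    rw [step1 (show rc .p .blank = some .blank from rfl)]
    simp

/-- rest of the final phase: back to the initial configuration -/
lemma fin3 (E : List α) (v x1 e : α) (k : ℕ) :
    iterL rc (E.length + 2 + k)
      (bl E ++ [(v, .w), (x1, .p), (e, .blank)]) =
    iterL rc k ((e, .blank) :: (bl E ++ [(v, .t), (x1, .blank)])) := by
  rw [show E.length + 2 + k = E.length + ((k + 1) + 1) by omega]
  rw [show (bl E ++ [(v, Ctl.w), (x1, Ctl.p), (e, Ctl.blank)] : List (α × Ctl))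
        = bl E ++ (v, Ctl.w) :: [(x1, Ctl.p), (e, Ctl.blank)] by simp]
  rw [pass E (v, .w) _ rfl]
  rw [show ((v, Ctl.w) :: ([(x1, Ctl.p), (e, Ctl.blank)] ++ bl E) : List (α × Ctl))
        = (v, Ctl.w) :: (x1, Ctl.p) :: ((e, Ctl.blank) :: bl E) by simp]
  rw [step1 (show rc .w .p = some .t from rfl)]
  rw [show ((x1, Ctl.p) :: ((e, Ctl.blank) :: bl E ++ [(v, Ctl.t)]) : List (α × Ctl))
        = (x1, Ctl.p) :: (e, Ctl.blank) :: (bl E ++ [(v, Ctl.t)]) by simp]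
  rw [step1 (show rc .p .blank = some .blank from rfl)]
  simp

end LagAux

open LagAux


open Stmt5 in
/-- Starting from `(s₁,blank)...(s_{n-2},blank)(s_{n-1},t)(sₙ,blank)` with `n ≥ 3`:
after `(n−1)²` iterations the string is `(s₂,blank)...(s_{n-1},w)(sₙ,p)(s₁,blank)`,
and after `n(n−1)` iterations the string equals the initial string. -/
theorem stmt5 {α : Type*} (n : ℕ) (hn : 3 ≤ n) (s : Fin n → α) :
    iterL rc ((n - 1) ^ 2)
      (List.ofFn fun i : Fin n => (s i, if i.val = n - 2 then Ctl.t else Ctl.blank)) =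
      some (List.ofFn fun i : Fin n =>
        (s ⟨(i.val + 1) % n, Nat.mod_lt _ (by omega)⟩,
          if i.val = n - 3 then Ctl.w else if i.val = n - 2 then Ctl.p else Ctl.blank)) ∧
    iterL rc (n * (n - 1))
      (List.ofFn fun i : Fin n => (s i, if i.val = n - 2 then Ctl.t else Ctl.blank)) =
      some (List.ofFn fun i : Fin n =>
        (s i, if i.val = n - 2 then Ctl.t else Ctl.blank)) := by
  obtain ⟨m, rfl⟩ : ∃ m, n = m + 3 := ⟨n - 3, by omega⟩
  set D : List α := List.ofFn (fun i : Fin m => s ⟨i.val, by omega⟩) with hD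
  set E : List α := List.ofFn (fun i : Fin m => s ⟨i.val + 1, by omega⟩) with hE'
  set d : α := s ⟨m, by omega⟩ with hd
  set t_ : α := s ⟨m + 1, by omega⟩ with ht
  set v : α := s ⟨m + 2, by omega⟩ with hv
  set e : α := s ⟨0, by omega⟩ with he
  have hDlen : D.length = m := by simp [hD]
  have hElen : E.length = m := by simp [hE']
  -- Bridge 0 : the initial configuration
  have hB0 : (List.ofFn fun i : Fin (m+3) => (s i, if i.val = m + 3 - 2 then Ctl.t else Ctl.blank))
      = bl D ++ [(d, .blank), (t_, .t), (v, .blank)] := by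
    rw [hD, hd, ht, hv]
    apply List.ext_getElem
    · simp
    · intro i h1 h2
      simp only [List.length_append, List.length_map, List.length_ofFn, List.length_cons,
        List.length_nil, bl] at h1 h2
      simp only [List.getElem_ofFn, bl, List.getElem_append, List.getElem_map, List.length_map,
        List.length_ofFn, List.getElem_cons]
      split_ifs <;>
        first
          | rfl
          | omega
          | (refine Prod.ext ?_ ?_ <;>
              first
                | rfl
                | (show s _ = s _; congr 1; exact Fin.ext (by simp; omega)))
  -- D ++ [d] = e :: E
  have hE : D ++ [d] = e :: E := by
    rw [hD, hE', hd, he]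
    apply List.ext_getElem
    · simp
    · intro i h1 h2
      simp only [List.length_append, List.length_ofFn, List.length_cons, List.length_nil] at h1 h2
      simp only [List.getElem_ofFn, List.getElem_append, List.length_ofFn, List.getElem_cons]
      split_ifs <;>
        first
          | rfl
          | omega
          | (show s _ = s _; congr 1; exact Fin.ext (by simp; omega))
  -- Bridge 1 : the (n-1)^2 milestone
  have hB1 : (List.ofFn fun i : Fin (m+3) =>
        (s ⟨(i.val + 1) % (m+3), Nat.mod_lt _ (by omega)⟩,
          if i.val = m + 3 - 3 then Ctl.w else if i.val = m + 3 - 2 then Ctl.p else Ctl.blank))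
      = bl E ++ [(t_, .w), (v, .p), (e, .blank)] := by
    simp only [hE', ht, hv, he]
    apply List.ext_getElem
    · simp
    · intro i h1 h2
      simp only [List.length_append, List.length_map, List.length_ofFn, List.length_cons,
        List.length_nil, bl] at h1 h2
      simp only [List.getElem_ofFn, bl, List.getElem_append, List.getElem_map, List.length_map,
        List.length_ofFn, List.getElem_cons]
      have hmod : (i + 1) % (m + 3) = if i = m + 2 then 0 else i + 1 := by
        split_ifs with h
        · subst h; simp [show m + 2 + 1 = m + 3 from rfl, Nat.mod_self]
        · exact Nat.mod_eq_of_lt (by omega)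
      split_ifs <;>
        first
          | rfl
          | omega
          | (refine Prod.ext ?_ ?_ <;>
              first
                | rfl
                | (show s _ = s _; congr 1; exact Fin.ext (by simp [hmod]; first | omega | (split_ifs <;> omega))))
  -- main chain: (m+2)^2 steps to the milestone
  have key1 : iterL rc ((m + 2) ^ 2) (bl D ++ [(d, .blank), (t_, .t), (v, .blank)])
      = some (bl E ++ [(t_, .w), (v, .p), (e, .blank)]) := by
    have s1 := initP D d t_ v (m * (m + 3) + 2)
    rw [hDlen] at s1
    have s2 := rounds D [v] (by simp) d [] t_ 2
    simp only [hDlen, List.length_cons, List.length_nil, List.append_nil] at s2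
    have s3 := fin2 v e E t_ 0
    rw [show (m + 2) ^ 2 = m + 2 + (m * (m + 3) + 2) by ring, s1]
    rw [show ((v, Ctl.blank) :: (bl D ++ [(d, Ctl.p), (t_, Ctl.w)]) : List (α × Ctl))
          = bl ([v] ++ D) ++ (d, Ctl.p) :: (bl [] ++ [(t_, Ctl.w)]) by simp]
    rw [show m * (0 + 1 + m + 0 + 2) + 2 = m * (1 + m + 0 + 2) + 2 by ring_nf] at s2
    rw [show m * (m + 3) + 2 = m * (1 + m + 0 + 2) + 2 by ring, s2]
    rw [hE]
    rw [show (bl [v] ++ pk (e :: E) ++ [(t_, Ctl.w)] : List (α × Ctl))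
          = (v, Ctl.blank) :: (e, Ctl.p) :: (bl E ++ [(t_, Ctl.w)]) by simp [pk]]
    rw [show (2 : ℕ) = 2 + 0 from rfl, s3]
    rfl
  -- m+2 further steps back to the start
  have key2 : iterL rc (m + 2) (bl E ++ [(t_, .w), (v, .p), (e, .blank)])
      = some (bl D ++ [(d, .blank), (t_, .t), (v, .blank)]) := by
    have s4 := fin3 E t_ v e 0
    rw [hElen] at s4
    rw [show m + 2 = m + 2 + 0 from rfl, s4]
    rw [show (bl D ++ [(d, Ctl.blank), (t_, Ctl.t), (v, Ctl.blank)] : List (α × Ctl))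
          = bl (D ++ [d]) ++ [(t_, Ctl.t), (v, Ctl.blank)] by simp]
    rw [hE]
    rfl
  constructor
  · rw [hB0, hB1, show (m + 3 - 1) ^ 2 = (m + 2) ^ 2 from rfl]
    exact key1
  · rw [hB0, show (m + 3) * (m + 3 - 1) = (m + 2) ^ 2 + (m + 2) by rw [show m + 3 - 1 = m + 2 from rfl]; ring]
    rw [iterL_add, key1]
    exact key2
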